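/- Let p be an offspring distribution with p(0) = 0, p(0)+p(1) < 1 and finite mean, q a mark function with ∃k, p(k)q(k) > 0, and suppose r := min{j > 0 : p(j) > 0} ≥ 2. Fix s ∈ (0,1) and let f_s(t) = Σ_{k≥r} p(k) t^k (s q(k)+1−q(k)). Then for every t ∈ (0,1], the series b(t) = ln(t) + Σ_{j=0}^∞ r^{−(j+1)} ln(f_s^{∘(j+1)}(t) / (f_s^{∘j}(t))^r) converges, b(t) < 0, and f_s^{∘p}(t) = α_r(s)^{−1/(r−1)} e^{r^p b(t)} (1+o(1)) as p → ∞, where α_r(s) = p(r)(s q(r)+1−q(r)). -/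

import Mathlib

open MeasureTheory ProbabilityTheory Filter Finset
open scoped ENNReal NNReal Topology

set_option maxHeartbeats 2000000 in
theorem stmt_17
    (p q : ℕ → ℝ) (hp : ∀ k, 0 ≤ p k) (hpsum : ∑' k, p k = 1)
    (hq : ∀ k, q k ∈ Set.Icc (0 : ℝ) 1)
    (hdeg : p 0 + p 1 < 1) (hmark : ∃ k, 0 < p k * q k)
    (mp : ℝ) (hmean : HasSum (fun k : ℕ => (k : ℝ) * p k) mp)
    (s : ℝ) (hs : s ∈ Set.Ioo (0 : ℝ) 1)
    (fs : ℝ → ℝ)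
    (hfs : ∀ t, fs t = ∑' k, p k * t ^ k * (s * q k + 1 - q k))
    (hp0 : p 0 = 0)
    (r : ℕ) (hr2 : 2 ≤ r) (hpr : 0 < p r) (hrmin : ∀ j, 0 < j → j < r → p j = 0) :
    ∀ t ∈ Set.Ioc (0 : ℝ) 1,
      Summable (fun j : ℕ => ((r : ℝ) ^ (j + 1))⁻¹ *
        Real.log (fs^[j + 1] t / (fs^[j] t) ^ r)) ∧
      ∀ b : ℝ,
        b = Real.log t + ∑' j : ℕ, ((r : ℝ) ^ (j + 1))⁻¹ *
          Real.log (fs^[j + 1] t / (fs^[j] t) ^ r) →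
        b < 0 ∧
          Tendsto (fun n : ℕ => fs^[n] t /
              ((p r * (s * q r + 1 - q r)) ^ (-(1 : ℝ) / ((r : ℝ) - 1)) *
                Real.exp ((r : ℝ) ^ n * b)))
            atTop (𝓝 1) := by
  intro t ht
  obtain ⟨ht0, ht1⟩ := ht
  obtain ⟨hs0, hs1⟩ := hs
  have hr1 : (1 : ℝ) < (r : ℝ) := by exact_mod_cast lt_of_lt_of_le one_lt_two hr2
  have hrpos : (0 : ℝ) < (r : ℝ) := lt_trans one_pos hr1
  have hrne : (r : ℝ) ≠ 0 := ne_of_gt hrpos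
  have hrinv_pos : (0 : ℝ) < (r : ℝ)⁻¹ := inv_pos.mpr hrpos
  have hrinv_lt1 : (r : ℝ)⁻¹ < 1 := by
    rw [inv_lt_one_iff₀]; right; exact hr1
  have key2 : ∀ a x : ℝ, 0 ≤ a → 0 ≤ x → x ≤ 1 → a * x ≤ a := by
    intro a x ha hx hx1; nlinarith
  have key3 : ∀ a x y : ℝ, 0 ≤ a → 0 ≤ x → x ≤ 1 → 0 ≤ y → y ≤ 1 → a * x * y ≤ a := by
    intro a x y ha hx hx1 hy hy1
    have h1 : a * x * y ≤ a * x := key2 (a * x) y (mul_nonneg ha hx) hy hy1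
    have h2 : a * x ≤ a := key2 a x ha hx hx1
    linarith
  have key4 : ∀ a x y : ℝ, 0 ≤ a → 0 ≤ x → x ≤ 1 → 0 ≤ y → a * x * y ≤ a * y := by
    intro a x y ha hx hx1 hy
    calc a * x * y = (a * y) * x := by ring
      _ ≤ a * y := key2 (a * y) x (mul_nonneg ha hy) hx hx1
  -- the mark factor
  obtain ⟨c, hc_def⟩ : ∃ c : ℕ → ℝ, c = fun k => s * q k + 1 - q k := ⟨_, rfl⟩
  have hc_eq : ∀ k, c k = s * q k + 1 - q k := fun k => by rw [hc_def]
  have hc_lb : ∀ k, s ≤ c k := by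
    intro k; obtain ⟨h1, h2⟩ := hq k; rw [hc_eq k]; nlinarith
  have hc_ub : ∀ k, c k ≤ 1 := by
    intro k; obtain ⟨h1, h2⟩ := hq k; rw [hc_eq k]; nlinarith
  have hc_pos : ∀ k, 0 < c k := fun k => lt_of_lt_of_le hs0 (hc_lb k)
  have hpsummable : Summable p := by
    by_contra h
    rw [tsum_eq_zero_of_not_summable h] at hpsum; norm_num at hpsum
  have hfs' : ∀ u : ℝ, fs u = ∑' k, p k * u ^ k * c k := by
    intro u; rw [hfs u]; simp only [hc_def]
  have hFsummable : ∀ u : ℝ, 0 ≤ u → u ≤ 1 → Summable (fun k => p k * u ^ k * c k) := by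
    intro u hu0 hu1
    exact Summable.of_nonneg_of_le
      (fun k => mul_nonneg (mul_nonneg (hp k) (pow_nonneg hu0 k)) (hc_pos k).le)
      (fun k => key3 (p k) (u ^ k) (c k) (hp k) (pow_nonneg hu0 k)
        (pow_le_one₀ hu0 hu1) (hc_pos k).le (hc_ub k))
      hpsummable
  obtain ⟨α, hα_def⟩ : ∃ a : ℝ, a = p r * c r := ⟨_, rfl⟩
  have hα_pos : 0 < α := hα_def ▸ mul_pos hpr (hc_pos r)
  have hpc_summable : Summable (fun k => p k * c k) :=
    Summable.of_nonneg_of_le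
      (fun k => mul_nonneg (hp k) (hc_pos k).le)
      (fun k => key2 (p k) (c k) (hp k) (hc_pos k).le (hc_ub k))
      hpsummable
  obtain ⟨γ, hγ_def⟩ : ∃ a : ℝ, a = ∑' k, p k * c k := ⟨_, rfl⟩
  have hγ_lt1 : γ < 1 := by
    obtain ⟨k0, hk0⟩ := hmark
    have hpk0' : 0 < p k0 := by
      rcases lt_or_eq_of_le (hp k0) with h | h
      · exact h
      · exfalso; rw [← h] at hk0; simp at hk0
    have hqk0 : 0 < q k0 := by
      by_contra h
      push_neg at h
      have h2 := (hq k0).1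
      have h3 : q k0 = 0 := le_antisymm h h2
      rw [h3] at hk0; simp at hk0
    have hck0 : c k0 < 1 := by
      have h2 := (hq k0).2
      rw [hc_eq k0]; nlinarith
    have h := Summable.tsum_lt_tsum (f := fun k => p k * c k) (g := p) (i := k0)
      (fun k => key2 (p k) (c k) (hp k) (hc_pos k).le (hc_ub k))
      (by show p k0 * c k0 < p k0; nlinarith) hpc_summable hpsummable
    rw [hpsum] at h
    rw [hγ_def]
    exact h
  have hα_le_γ : α ≤ γ := by
    rw [hα_def, hγ_def]
    exact Summable.le_tsum hpc_summable r (fun j _ => mul_nonneg (hp j) (hc_pos j).le)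
  have hγ_pos : 0 < γ := lt_of_lt_of_le hα_pos hα_le_γ
  have hpk0 : ∀ k, k < r → p k = 0 := by
    intro k hk
    rcases Nat.eq_zero_or_pos k with h | h
    · rw [h]; exact hp0
    · exact hrmin k h hk
  have hshift : ∀ a : ℕ → ℝ, Summable a → (∀ k, k < r → a k = 0) →
      ∑' k, a k = ∑' k, a (k + r) := by
    intro a ha h0
    rw [← Summable.sum_add_tsum_nat_add r ha,
      Finset.sum_eq_zero (fun i hi => h0 i (Finset.mem_range.mp hi))]
    ring
  obtain ⟨g, hg_def⟩ : ∃ g : ℝ → ℝ, g = fun u => ∑' k, p (k + r) * u ^ k * c (k + r) :=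
    ⟨_, rfl⟩
  have hg_eq : ∀ u : ℝ, g u = ∑' k, p (k + r) * u ^ k * c (k + r) := fun u => by rw [hg_def]
  have hgsummable : ∀ u : ℝ, 0 ≤ u → u ≤ 1 →
      Summable (fun k => p (k + r) * u ^ k * c (k + r)) := by
    intro u hu0 hu1
    exact Summable.of_nonneg_of_le
      (fun k => mul_nonneg (mul_nonneg (hp (k + r)) (pow_nonneg hu0 k)) (hc_pos (k + r)).le)
      (fun k => key3 (p (k + r)) (u ^ k) (c (k + r)) (hp (k + r)) (pow_nonneg hu0 k)
        (pow_le_one₀ hu0 hu1) (hc_pos (k + r)).le (hc_ub (k + r)))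
      ((summable_nat_add_iff r).mpr hpsummable)
  have hfs_eq : ∀ u : ℝ, 0 ≤ u → u ≤ 1 → fs u = u ^ r * g u := by
    intro u hu0 hu1
    calc fs u = ∑' k, p k * u ^ k * c k := hfs' u
      _ = ∑' k, p (k + r) * u ^ (k + r) * c (k + r) :=
          hshift _ (hFsummable u hu0 hu1)
            (fun k hk => by show p k * u ^ k * c k = 0; rw [hpk0 k hk]; ring)
      _ = ∑' k, u ^ r * (p (k + r) * u ^ k * c (k + r)) :=
          tsum_congr (fun k => by rw [pow_add]; ring)
      _ = u ^ r * ∑' k, p (k + r) * u ^ k * c (k + r) := tsum_mul_left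
      _ = u ^ r * g u := by rw [hg_eq u]
  -- bounds on g
  have hg_lb : ∀ u : ℝ, 0 ≤ u → u ≤ 1 → α ≤ g u := by
    intro u hu0 hu1
    have h := Summable.le_tsum (hgsummable u hu0 hu1) 0
      (fun j _ => mul_nonneg (mul_nonneg (hp (j + r)) (pow_nonneg hu0 j)) (hc_pos (j + r)).le)
    have h2 : p (0 + r) * u ^ 0 * c (0 + r) = α := by
      rw [zero_add, pow_zero, hα_def]; ring
    rw [h2] at h
    rw [hg_eq u]
    exact h
  have hg_pos : ∀ u : ℝ, 0 ≤ u → u ≤ 1 → 0 < g u :=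
    fun u hu0 hu1 => lt_of_lt_of_le hα_pos (hg_lb u hu0 hu1)
  have hg_ub_γ : ∀ u : ℝ, 0 ≤ u → u ≤ 1 → g u ≤ γ := by
    intro u hu0 hu1
    have hs2 : Summable (fun k => p (k + r) * c (k + r)) :=
      ((summable_nat_add_iff r).mpr hpc_summable).congr (fun k => rfl)
    calc g u = ∑' k, p (k + r) * u ^ k * c (k + r) := hg_eq u
      _ ≤ ∑' k, p (k + r) * c (k + r) := by
          refine Summable.tsum_le_tsum (fun k => ?_) (hgsummable u hu0 hu1) hs2
          exact key4 (p (k + r)) (u ^ k) (c (k + r)) (hp (k + r)) (pow_nonneg hu0 k)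
            (pow_le_one₀ hu0 hu1) (hc_pos (k + r)).le
      _ = ∑' k, p k * c k := (hshift (fun k => p k * c k) hpc_summable
          (fun k hk => by show p k * c k = 0; rw [hpk0 k hk]; ring)).symm
      _ = γ := hγ_def.symm
  have hg_ub : ∀ u : ℝ, 0 ≤ u → u ≤ 1 → g u ≤ α + u := by
    intro u hu0 hu1
    have hsum := hgsummable u hu0 hu1
    have h' : (∑ i ∈ Finset.range 1, p (i + r) * u ^ i * c (i + r)) +
        ∑' i : ℕ, p (i + 1 + r) * u ^ (i + 1) * c (i + 1 + r) =
        ∑' k, p (k + r) * u ^ k * c (k + r) :=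
      Summable.sum_add_tsum_nat_add 1 hsum
    have h0 : ∑ i ∈ Finset.range 1, p (i + r) * u ^ i * c (i + r) = α := by
      rw [Finset.sum_range_one, zero_add, pow_zero, hα_def]; ring
    rw [h0] at h'
    have htail_summ : Summable (fun i : ℕ => p (i + 1 + r) * u ^ (i + 1) * c (i + 1 + r)) :=
      (summable_nat_add_iff 1).mpr hsum
    have hps : Summable (fun i : ℕ => p (i + (1 + r))) :=
      (summable_nat_add_iff (1 + r)).mpr hpsummable
    have htail : ∑' i : ℕ, p (i + 1 + r) * u ^ (i + 1) * c (i + 1 + r) ≤ u := by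
      have hb : ∑' i : ℕ, p (i + (1 + r)) * u ≤ 1 * u := by
        rw [tsum_mul_right]
        refine mul_le_mul_of_nonneg_right ?_ hu0
        have h2 := Summable.sum_add_tsum_nat_add (1 + r) hpsummable
        have h3 : 0 ≤ ∑ i ∈ Finset.range (1 + r), p i :=
          Finset.sum_nonneg (fun i _ => hp i)
        rw [hpsum] at h2
        linarith
      have hle : ∑' i : ℕ, p (i + 1 + r) * u ^ (i + 1) * c (i + 1 + r) ≤
          ∑' i : ℕ, p (i + (1 + r)) * u := by
        refine Summable.tsum_le_tsum (fun i => ?_) htail_summ (hps.mul_right u)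
        have h1 : u ^ (i + 1) ≤ u := pow_le_of_le_one hu0 hu1 (Nat.succ_ne_zero i)
        have h4 : i + 1 + r = i + (1 + r) := by ring
        rw [h4]
        calc p (i + (1 + r)) * u ^ (i + 1) * c (i + (1 + r))
            ≤ p (i + (1 + r)) * u ^ (i + 1) :=
              key2 _ _ (mul_nonneg (hp _) (pow_nonneg hu0 _)) (hc_pos _).le (hc_ub _)
          _ ≤ p (i + (1 + r)) * u :=
              mul_le_mul_of_nonneg_left h1 (hp _)
      linarith
    have hval : g u = α + ∑' i : ℕ, p (i + 1 + r) * u ^ (i + 1) * c (i + 1 + r) := by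
      rw [hg_eq u, ← h']
    linarith
  -- bounds on fs
  have hfs_pos : ∀ u : ℝ, 0 < u → u ≤ 1 → 0 < fs u := by
    intro u hu0 hu1
    rw [hfs_eq u hu0.le hu1]
    exact mul_pos (pow_pos hu0 r) (hg_pos u hu0.le hu1)
  have hfs_ub : ∀ u : ℝ, 0 < u → u ≤ 1 → fs u ≤ γ * u := by
    intro u hu0 hu1
    rw [hfs_eq u hu0.le hu1]
    have h1 : u ^ r ≤ u := pow_le_of_le_one hu0.le hu1 (by omega)
    have h2 : g u ≤ γ := hg_ub_γ u hu0.le hu1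
    calc u ^ r * g u ≤ u ^ r * γ :=
          mul_le_mul_of_nonneg_left h2 (pow_nonneg hu0.le r)
      _ ≤ u * γ := mul_le_mul_of_nonneg_right h1 hγ_pos.le
      _ = γ * u := by ring
  -- iterates
  have hiter : ∀ n : ℕ, 0 < fs^[n] t ∧ fs^[n] t ≤ 1 ∧ fs^[n] t ≤ γ ^ n * t := by
    intro n
    induction n with
    | zero => exact ⟨ht0, ht1, by simp⟩
    | succ n ih =>
      obtain ⟨h1, h2, h3⟩ := ih
      rw [Function.iterate_succ_apply']
      refine ⟨hfs_pos _ h1 h2, ?_, ?_⟩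
      · have h6 := hfs_ub _ h1 h2
        have h7 : γ * fs^[n] t ≤ γ * 1 := mul_le_mul_of_nonneg_left h2 hγ_pos.le
        rw [mul_one] at h7
        linarith
      · have h5 := hfs_ub _ h1 h2
        have h4 : γ * fs^[n] t ≤ γ * (γ ^ n * t) :=
          mul_le_mul_of_nonneg_left h3 hγ_pos.le
        calc fs (fs^[n] t) ≤ γ * fs^[n] t := h5
          _ ≤ γ * (γ ^ n * t) := h4
          _ = γ ^ (n + 1) * t := by ring
  -- the log sequence
  obtain ⟨G, hG_def⟩ : ∃ G : ℕ → ℝ, G = fun j => Real.log (g (fs^[j] t)) := ⟨_, rfl⟩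
  have hG_eq : ∀ j, G j = Real.log (g (fs^[j] t)) := fun j => by rw [hG_def]
  have hG_lb : ∀ j, Real.log α ≤ G j := fun j => by
    rw [hG_eq j]
    exact Real.log_le_log hα_pos (hg_lb _ (hiter j).1.le (hiter j).2.1)
  have hG_ub : ∀ j, G j ≤ Real.log γ := fun j => by
    rw [hG_eq j]
    exact Real.log_le_log (hg_pos _ (hiter j).1.le (hiter j).2.1)
      (hg_ub_γ _ (hiter j).1.le (hiter j).2.1)
  have hG_ub2 : ∀ j, G j ≤ Real.log α + fs^[j] t / α := by
    intro j
    have h0 := (hiter j).1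
    have h1 : g (fs^[j] t) ≤ α + fs^[j] t := hg_ub _ h0.le (hiter j).2.1
    have h2 : G j ≤ Real.log (α + fs^[j] t) := by
      rw [hG_eq j]
      exact Real.log_le_log (hg_pos _ h0.le (hiter j).2.1) h1
    have h3 : Real.log (α + fs^[j] t) = Real.log α + Real.log ((α + fs^[j] t) / α) := by
      rw [Real.log_div (by positivity) (ne_of_gt hα_pos)]
      ring
    have h4 : Real.log ((α + fs^[j] t) / α) ≤ (α + fs^[j] t) / α - 1 :=
      Real.log_le_sub_one_of_pos (by positivity)
    have h5 : (α + fs^[j] t) / α - 1 = fs^[j] t / α := by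
      field_simp
      ring
    linarith
  -- ratio identity
  have hratio : ∀ j : ℕ, fs^[j + 1] t / (fs^[j] t) ^ r = g (fs^[j] t) := by
    intro j
    have h0 := (hiter j).1
    rw [Function.iterate_succ_apply', hfs_eq _ h0.le (hiter j).2.1]
    exact mul_div_cancel_left₀ _ (pow_ne_zero r (ne_of_gt h0))
  have hfun : ∀ j : ℕ, ((r : ℝ) ^ (j + 1))⁻¹ * Real.log (fs^[j + 1] t / (fs^[j] t) ^ r)
      = ((r : ℝ) ^ (j + 1))⁻¹ * G j := by
    intro j; rw [hratio j, hG_eq j]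
  -- uniform bound and summability
  obtain ⟨C, hC_def⟩ : ∃ C : ℝ, C = max |Real.log α| |Real.log γ| := ⟨_, rfl⟩
  have hGbound : ∀ j, |G j| ≤ C := fun j =>
    hC_def ▸ abs_le_max_abs_abs (hG_lb j) (hG_ub j)
  have hsummaux : ∀ h : ℕ → ℕ, Summable (fun j : ℕ => ((r : ℝ) ^ (j + 1))⁻¹ * G (h j)) := by
    intro h
    refine Summable.of_norm_bounded (g := fun j => (C * (r : ℝ)⁻¹) * ((r : ℝ)⁻¹) ^ j)
      ((summable_geometric_of_lt_one hrinv_pos.le hrinv_lt1).mul_left _) (fun j => ?_)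
    have hpow : (0:ℝ) < ((r : ℝ) ^ (j + 1))⁻¹ := by positivity
    calc ‖((r : ℝ) ^ (j + 1))⁻¹ * G (h j)‖
        = ((r : ℝ) ^ (j + 1))⁻¹ * |G (h j)| := by
          rw [Real.norm_eq_abs, abs_mul, abs_of_pos hpow]
      _ ≤ ((r : ℝ) ^ (j + 1))⁻¹ * C := mul_le_mul_of_nonneg_left (hGbound (h j)) hpow.le
      _ = (C * (r : ℝ)⁻¹) * ((r : ℝ)⁻¹) ^ j := by
          rw [← inv_pow, pow_succ]; ring
  have hsummG : Summable (fun j : ℕ => ((r : ℝ) ^ (j + 1))⁻¹ * G j) := hsummaux id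
  constructor
  · exact hsummG.congr (fun j => (hfun j).symm)
  intro b hb
  have hb' : b = Real.log t + ∑' j : ℕ, ((r : ℝ) ^ (j + 1))⁻¹ * G j := by
    rw [hb]; congr 1; exact tsum_congr hfun
  -- geometric constant
  have hK_summable : Summable (fun i : ℕ => ((r : ℝ)⁻¹) ^ (i + 1)) :=
    (summable_nat_add_iff 1).mpr (summable_geometric_of_lt_one hrinv_pos.le hrinv_lt1)
  obtain ⟨K, hK_def⟩ : ∃ K : ℝ, K = ∑' i : ℕ, ((r : ℝ)⁻¹) ^ (i + 1) := ⟨_, rfl⟩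
  have hK_pos : 0 < K := by
    rw [hK_def]
    exact Summable.tsum_pos hK_summable (fun i => by positivity) 0 (pow_pos hrinv_pos 1)
  have hK_val : K = ((r : ℝ) - 1)⁻¹ := by
    have h1 : K = (∑' i : ℕ, ((r : ℝ)⁻¹) ^ i) * (r : ℝ)⁻¹ := by
      rw [hK_def, ← tsum_mul_right]
      exact tsum_congr (fun i => by rw [pow_succ])
    rw [h1, tsum_geometric_of_lt_one hrinv_pos.le hrinv_lt1, ← mul_inv]
    congr 1
    field_simp
  have hrn_inv : ∀ j : ℕ, ((r : ℝ) ^ (j + 1))⁻¹ = ((r : ℝ)⁻¹) ^ (j + 1) :=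
    fun j => (inv_pow _ _).symm
  -- b < 0
  have hb_neg : b < 0 := by
    have h1 : ∑' j : ℕ, ((r : ℝ) ^ (j + 1))⁻¹ * G j ≤
        ∑' j : ℕ, ((r : ℝ)⁻¹) ^ (j + 1) * Real.log γ := by
      refine Summable.tsum_le_tsum (fun j => ?_) hsummG (hK_summable.mul_right _)
      rw [← hrn_inv j]
      exact mul_le_mul_of_nonneg_left (hG_ub j) (by positivity)
    have h2 : ∑' j : ℕ, ((r : ℝ)⁻¹) ^ (j + 1) * Real.log γ = K * Real.log γ := by
      rw [tsum_mul_right, ← hK_def]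
    have hlogγ : Real.log γ < 0 := Real.log_neg hγ_pos hγ_lt1
    have h3 : K * Real.log γ < 0 := mul_neg_of_pos_of_neg hK_pos hlogγ
    have hlogt : Real.log t ≤ 0 := Real.log_nonpos ht0.le ht1
    rw [hb']
    rw [h2] at h1
    linarith
  -- partial sum identity
  have hlog_iter : ∀ n : ℕ, Real.log (fs^[n] t) =
      (r : ℝ) ^ n * (Real.log t + ∑ j ∈ Finset.range n, ((r : ℝ) ^ (j + 1))⁻¹ * G j) := by
    intro n
    induction n with
    | zero => simp
    | succ n ih =>
      have h0 := (hiter n).1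
      rw [Function.iterate_succ_apply', hfs_eq _ h0.le (hiter n).2.1,
        Real.log_mul (pow_ne_zero r (ne_of_gt h0))
          (ne_of_gt (hg_pos _ h0.le (hiter n).2.1)),
        Real.log_pow, ih, Finset.sum_range_succ, ← hG_eq n]
      have hrn : ((r : ℝ) ^ (n + 1)) ≠ 0 := by positivity
      field_simp
      ring
  -- tail identity
  obtain ⟨E, hE_def⟩ : ∃ E : ℕ → ℝ,
      E = fun n => ∑' i : ℕ, ((r : ℝ) ^ (i + 1))⁻¹ * G (i + n) := ⟨_, rfl⟩
  have hE_eq : ∀ n, E n = ∑' i : ℕ, ((r : ℝ) ^ (i + 1))⁻¹ * G (i + n) := fun n => by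
    rw [hE_def]
  have hbn : ∀ n : ℕ, (r : ℝ) ^ n * b = Real.log (fs^[n] t) + E n := by
    intro n
    have h1 : (∑ j ∈ Finset.range n, ((r : ℝ) ^ (j + 1))⁻¹ * G j) +
        ∑' i : ℕ, ((r : ℝ) ^ (i + n + 1))⁻¹ * G (i + n) =
        ∑' j : ℕ, ((r : ℝ) ^ (j + 1))⁻¹ * G j :=
      Summable.sum_add_tsum_nat_add n hsummG
    have h2 : ∑' i : ℕ, ((r : ℝ) ^ (i + n + 1))⁻¹ * G (i + n) = ((r : ℝ) ^ n)⁻¹ * E n := by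
      rw [hE_eq n, ← tsum_mul_left]
      refine tsum_congr (fun i => ?_)
      rw [show i + n + 1 = (i + 1) + n by ring, pow_add, mul_inv]
      ring
    have h3 : b = (Real.log t + ∑ j ∈ Finset.range n, ((r : ℝ) ^ (j + 1))⁻¹ * G j)
        + ((r : ℝ) ^ n)⁻¹ * E n := by
      rw [hb', ← h1, ← h2]
      ring
    rw [h3, hlog_iter n]
    have hrn : ((r : ℝ) ^ n) ≠ 0 := by positivity
    rw [mul_add, ← mul_assoc, mul_inv_cancel₀ hrn, one_mul]
  -- limit of E
  have hE_lb : ∀ n, K * Real.log α ≤ E n := by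
    intro n
    have h1 : ∑' i : ℕ, ((r : ℝ)⁻¹) ^ (i + 1) * Real.log α ≤
        ∑' i : ℕ, ((r : ℝ) ^ (i + 1))⁻¹ * G (i + n) := by
      refine Summable.tsum_le_tsum (fun i => ?_) (hK_summable.mul_right _) (hsummaux (· + n))
      rw [← hrn_inv i]
      exact mul_le_mul_of_nonneg_left (hG_lb (i + n)) (by positivity)
    rw [tsum_mul_right, ← hK_def, ← hE_eq n] at h1
    exact h1
  have hE_ub : ∀ n, E n ≤ K * Real.log α + K * (t / α) * γ ^ n := by
    intro n
    have h1 : ∑' i : ℕ, ((r : ℝ) ^ (i + 1))⁻¹ * G (i + n) ≤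
        ∑' i : ℕ, ((r : ℝ)⁻¹) ^ (i + 1) * (Real.log α + γ ^ n * t / α) := by
      refine Summable.tsum_le_tsum (fun i => ?_) (hsummaux (· + n)) (hK_summable.mul_right _)
      rw [← hrn_inv i]
      refine mul_le_mul_of_nonneg_left ?_ (by positivity)
      have h2 := hG_ub2 (i + n)
      have h3 : fs^[i + n] t ≤ γ ^ (i + n) * t := (hiter (i + n)).2.2
      have h4 : γ ^ (i + n) ≤ γ ^ n := by
        rw [pow_add]
        nlinarith [pow_le_one₀ hγ_pos.le hγ_lt1.le (n := i), pow_nonneg hγ_pos.le n,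
          pow_nonneg hγ_pos.le i]
      have h45 : fs^[i + n] t ≤ γ ^ n * t := by nlinarith [ht0]
      have h5 : fs^[i + n] t / α ≤ γ ^ n * t / α := by
        rw [div_eq_mul_inv, div_eq_mul_inv]
        exact mul_le_mul_of_nonneg_right h45 (inv_nonneg.mpr hα_pos.le)
      linarith
    rw [tsum_mul_right, ← hK_def, ← hE_eq n] at h1
    have h9 : K * (Real.log α + γ ^ n * t / α) = K * Real.log α + K * (t / α) * γ ^ n := by
      ring
    linarith
  have hE_lim : Tendsto E atTop (𝓝 (K * Real.log α)) := by
    have hub : Tendsto (fun n : ℕ => K * Real.log α + K * (t / α) * γ ^ n) atTop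
        (𝓝 (K * Real.log α)) := by
      have h1 := (tendsto_pow_atTop_nhds_zero_of_lt_one hγ_pos.le hγ_lt1).const_mul
        (K * (t / α))
      have h2 := h1.const_add (K * Real.log α)
      simpa using h2
    exact tendsto_of_tendsto_of_tendsto_of_le_of_le tendsto_const_nhds hub hE_lb hE_ub
  -- final limit
  have hα_eq : p r * (s * q r + 1 - q r) = α := by
    rw [hα_def, hc_eq r]
  have hrm1 : (r : ℝ) - 1 ≠ 0 := by
    intro h
    have : (r : ℝ) = 1 := by linarith
    linarith
  have hexp_eq : ∀ n : ℕ, fs^[n] t /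
      ((p r * (s * q r + 1 - q r)) ^ (-(1 : ℝ) / ((r : ℝ) - 1)) *
        Real.exp ((r : ℝ) ^ n * b)) =
      Real.exp (Real.log α / ((r : ℝ) - 1) - E n) := by
    intro n
    rw [hα_eq, Real.rpow_def_of_pos hα_pos]
    have h1 : fs^[n] t = Real.exp (Real.log (fs^[n] t)) := (Real.exp_log (hiter n).1).symm
    rw [h1, ← Real.exp_add, ← Real.exp_sub]
    congr 1
    have h2 := hbn n
    have h3 : Real.log α * (-(1 : ℝ) / ((r : ℝ) - 1)) = -(Real.log α / ((r : ℝ) - 1)) := by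
      field_simp
    rw [h3]
    linarith
  have hfinal : Tendsto (fun n : ℕ => Real.exp (Real.log α / ((r : ℝ) - 1) - E n)) atTop
      (𝓝 1) := by
    have h0 : Tendsto (fun n : ℕ => Real.log α / ((r : ℝ) - 1) - E n) atTop (𝓝 0) := by
      have h1 := hE_lim.const_sub (Real.log α / ((r : ℝ) - 1))
      have h2 : Real.log α / ((r : ℝ) - 1) - K * Real.log α = 0 := by
        rw [hK_val]
        field_simp
        ring
      rwa [h2] at h1
    have h3 := (Real.continuous_exp.tendsto 0).comp h0
    rw [Real.exp_zero] at h3; exact h3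
  refine ⟨hb_neg, ?_⟩
  have heq : (fun n : ℕ => fs^[n] t /
      ((p r * (s * q r + 1 - q r)) ^ (-(1 : ℝ) / ((r : ℝ) - 1)) *
        Real.exp ((r : ℝ) ^ n * b))) =
      fun n : ℕ => Real.exp (Real.log α / ((r : ℝ) - 1) - E n) := funext hexp_eq
  rw [heq]
  exact hfinal
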